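/- arXiv:2509.04288 — 5 statements merged into one kernel-verified Lean document; each statement's English description precedes it below -/
import Mathlib

section
/- Behavioral inclusion of the SAℓCA: for any ℓ with H ≥ ℓ > 1, every H-long output behavior of a transition system S is also an H-long behavior of its Strongest Asynchronous ℓ-complete Abstraction S_ℓ, i.e., B^H(S) ⊆ B^H(S_ℓ). -/
/-- A transition system `(X, X0, E, Y, H)`. -/
structure TS (X Y : Type*) where
  init : Set X
  edge : X → X → Prop
  out : X → Y

/-- The set of `H`-long output behaviors of a transition system. -/
def BehH {X Y : Type*} (S : TS X Y) (H : ℕ) : Set (List Y) :=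
  {b | ∃ r : ℕ → X, r 0 ∈ S.init ∧ (∀ k, k + 1 < H → S.edge (r k) (r (k + 1))) ∧
        b = (List.range H).map fun k => S.out (r k)}

/-- The set of `ℓ`-long contiguous subsequences of a set of behaviors. -/
def Xell {Y : Type*} (B : Set (List Y)) (ℓ : ℕ) : Set (List Y) :=
  {σ | σ.length = ℓ ∧ ∃ b ∈ B, σ <:+: b}

/-- The (strongest asynchronous) `ℓ`-complete abstraction built from a behavior set `B`
with initial-output set `Y0`: states are `ℓ`-long subsequences, transitions follow the
domino rule, the output is the first symbol. -/
def AbsTS {Y : Type*} [Inhabited Y] (B : Set (List Y)) (Y0 : Set Y) (ℓ : ℕ) :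
    TS (List Y) Y where
  init := {σ | σ ∈ Xell B ℓ ∧ ∃ y ∈ Y0, σ.head? = some y}
  edge := fun σ σ' => σ ∈ Xell B ℓ ∧ σ' ∈ Xell B ℓ ∧ σ.tail = σ'.dropLast
  out := fun σ => σ.headI

/-- The SAℓCA of a transition system `S` for horizon `H`. -/
def SAlCA {X Y : Type*} [Inhabited Y] (S : TS X Y) (H ℓ : ℕ) : TS (List Y) Y :=
  AbsTS (BehH S H) (S.out '' S.init) ℓ

/-- `H`-long behaviors of the abstraction built from behavior set `B`: a run of
`H - ℓ + 1` abstract states (windows) flattened into `H` output symbols (the heads of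
the windows followed by the tail of the last window). -/
def AbsBeh {Y : Type*} [Inhabited Y] (B : Set (List Y)) (Y0 : Set Y) (H ℓ : ℕ) :
    Set (List Y) :=
  {b | ∃ r : ℕ → List Y, r 0 ∈ (AbsTS B Y0 ℓ).init ∧
        (∀ k, k + 1 ≤ H - ℓ → (AbsTS B Y0 ℓ).edge (r k) (r (k + 1))) ∧
        b = ((List.range (H - ℓ + 1)).map fun k => (r k).headI) ++ (r (H - ℓ)).tail}

/-- `H`-long behaviors of the SAℓCA of `S`. -/
def AbsBehH {X Y : Type*} [Inhabited Y] (S : TS X Y) (H ℓ : ℕ) : Set (List Y) :=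
  AbsBeh (BehH S H) (S.out '' S.init) H ℓ


lemma range_map_add' {α : Type*} (f : ℕ → α) (a n : ℕ) :
    (List.range (a + n)).map f
      = (List.range a).map f ++ (List.range n).map (fun i => f (a + i)) := by
  rw [List.range_add, List.map_append, List.map_map]; rfl

/-- behavioral inclusion of the SAℓCA: `B^H(S) ⊆ B^H(S_ℓ)` for `H ≥ ℓ > 1`. -/
theorem stmt1 {X Y : Type*} [Inhabited Y] (S : TS X Y) (H ℓ : ℕ)
    (h1 : 1 < ℓ) (h2 : ℓ ≤ H) :
    BehH S H ⊆ AbsBehH S H ℓ := by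
  rintro b ⟨r, hr0, hre, rfl⟩
  set f : ℕ → Y := fun k => S.out (r k) with hf
  obtain ⟨n, rfl⟩ : ∃ n, ℓ = n + 1 := ⟨ℓ - 1, by omega⟩
  set w : ℕ → List Y := fun k => (List.range (n + 1)).map (fun i => f (k + i)) with hw
  have hwhead : ∀ k, (w k).headI = f k := by
    intro k
    rw [hw]; simp only []
    rw [List.range_succ_eq_map]
    simp
  have hwtail : ∀ k, (w k).tail = (List.range n).map (fun i => f (k + (i + 1))) := by
    intro k
    rw [hw]; simp only []
    rw [List.range_succ_eq_map, List.map_cons, List.tail_cons, List.map_map]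
    rfl
  have hwlast : ∀ k, (w k).dropLast = (List.range n).map (fun i => f (k + i)) := by
    intro k
    rw [hw]; simp only []
    rw [List.range_succ, List.map_append]
    simp
  have hbmem : (List.range H).map f ∈ BehH S H := ⟨r, hr0, hre, rfl⟩
  have hXell : ∀ k, k ≤ H - (n + 1) → w k ∈ Xell (BehH S H) (n + 1) := by
    intro k hk
    refine ⟨by simp [hw], (List.range H).map f, hbmem, ?_⟩
    refine ⟨(List.range k).map f,
      (List.range (H - (n + 1) - k)).map (fun i => f (k + (n + 1) + i)), ?_⟩
    have hH : H = k + (n + 1) + (H - (n + 1) - k) := by omega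
    rw [List.append_assoc]
    conv_rhs => rw [hH]
    rw [range_map_add', range_map_add', hw, List.append_assoc]
  refine ⟨w, ⟨hXell 0 (by omega), ⟨f 0, ⟨r 0, hr0, rfl⟩, ?_⟩⟩, ?_, ?_⟩
  · rw [hw]; simp only []
    rw [List.range_succ_eq_map]
    simp
  · intro k hk
    refine ⟨hXell k (by omega), hXell (k + 1) (by omega), ?_⟩
    rw [hwtail, hwlast]
    apply List.map_congr_left
    intro i _
    congr 1
    omega
  · have : ∀ k, (w k).headI = f k := hwhead
    calc (List.range H).map f
        = (List.range ((H - (n + 1) + 1) + n)).map f := by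
          rw [show (H - (n + 1) + 1) + n = H by omega]
      _ = (List.range (H - (n + 1) + 1)).map f
            ++ (List.range n).map (fun i => f (H - (n + 1) + 1 + i)) := range_map_add' f _ _
      _ = _ := by
          rw [hwtail]
          congr 1
          · apply List.map_congr_left
            intro i _
            exact (hwhead i).symm
          · apply List.map_congr_left
            intro i _
            congr 1
            omega
end

section
/- Monotonicity of SAℓCA in the memory parameter: if ℓ' > ℓ > 1 (both at most H), then B^H(S_{ℓ'}) ⊆ B^H(S_ℓ); that is, larger memory length yields a tighter over-approximation of the behavior set of S. -/
private lemma headI_take {Y : Type*} [Inhabited Y] (l : List Y) {m : ℕ} (hm : 0 < m) :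
    (l.take m).headI = l.headI := by
  cases l with
  | nil => simp
  | cons a t => cases m with
    | zero => omega
    | succ n => simp

private lemma decomp {Y : Type*} [Inhabited Y] :
    ∀ (n : ℕ) (l : List Y), n ≤ l.length →
      l = ((List.range n).map fun k => (l.drop k).headI) ++ l.drop n
  | 0, l, _ => by simp
  | n+1, l, h => by
    have hn : n < l.length := by omega
    have ih := decomp n l (by omega)
    have hd : l.drop n = l[n] :: l.drop (n+1) := List.drop_eq_getElem_cons hn
    have hh : l.drop n = (l.drop n).headI :: l.drop (n+1) := by
      conv_rhs => rw [hd]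
      simp only [List.headI_cons]
      exact hd
    rw [List.range_succ, List.map_append, List.append_assoc]
    simp only [List.map_cons, List.map_nil, List.singleton_append]
    rw [← hh]
    exact ih

/-- monotonicity in the memory parameter: for `H ≥ ℓ' > ℓ > 1`,
`B^H(S_{ℓ'}) ⊆ B^H(S_ℓ)`. -/
theorem stmt2 {X Y : Type*} [Inhabited Y] (S : TS X Y) (H ℓ ℓ' : ℕ)
    (h1 : 1 < ℓ) (h2 : ℓ < ℓ') (h3 : ℓ' ≤ H) :
    AbsBehH S H ℓ' ⊆ AbsBehH S H ℓ := by
  intro b hb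
  obtain ⟨r, hinit, hedge, hb⟩ := hb
  have hX : ∀ j, j ≤ H - ℓ' → r j ∈ Xell (BehH S H) ℓ' := by
    intro j hj
    cases j with
    | zero => exact hinit.1
    | succ i => exact (hedge i (by omega)).2.1
  have hlen : ∀ j, j ≤ H - ℓ' → (r j).length = ℓ' := fun j hj => (hX j hj).1
  have hbl : b.length = H := by
    rw [hb]
    simp [hlen (H - ℓ') le_rfl]
    omega
  have hdropk : ∀ k, k ≤ H - ℓ' → b.drop k = (r k).headI :: b.drop (k+1) := by
    intro k hk
    rw [hb, List.drop_append_of_le_length (by simp; omega),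
      List.drop_append_of_le_length (by simp; omega)]
    have hr : (List.range (H - ℓ' + 1)).drop k = k :: (List.range (H - ℓ' + 1)).drop (k+1) := by
      rw [List.drop_eq_getElem_cons (by simp; omega)]
      simp
    rw [← List.map_drop, ← List.map_drop, hr]
    simp
  have hlast : b.drop (H - ℓ' + 1) = (r (H - ℓ')).tail := by
    rw [hb]
    have := List.drop_left (l₁ := (List.range (H - ℓ' + 1)).map fun k => (r k).headI) (l₂ := (r (H - ℓ')).tail)
    simpa using this
  have hbase : b.drop (H - ℓ') = r (H - ℓ') := by
    rw [hdropk (H - ℓ') le_rfl, hlast]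
    have hne : r (H - ℓ') ≠ [] := by
      intro h
      have := hlen (H - ℓ') le_rfl
      rw [h] at this
      simp at this
      omega
    cases h : r (H - ℓ') with
    | nil => exact absurd h hne
    | cons a t => simp
  have hpre : ∀ d k, k + d = H - ℓ' → r k <+: b.drop k := by
    intro d
    induction d with
    | zero =>
      intro k hk
      simp only [Nat.add_zero] at hk
      subst hk
      exact hbase ▸ List.prefix_refl _
    | succ d ih =>
      intro k hk
      have ihp := ih (k+1) (by omega)
      have he := hedge k (by omega)
      have hne : r k ≠ [] := by
        intro h
        have := hlen k (by omega)
        rw [h] at this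
        simp at this
        omega
      have hrk : r k = (r k).headI :: (r (k+1)).dropLast := by
        rw [← he.2.2]
        cases h : r k with
        | nil => exact absurd h hne
        | cons a t => simp
      rw [hdropk k (by omega), hrk]
      exact List.cons_prefix_cons.2 ⟨rfl, ((r (k+1)).dropLast_prefix).trans ihp⟩
  have hW : ∀ k, k ≤ H - ℓ → (b.drop k).take ℓ ∈ Xell (BehH S H) ℓ := by
    intro k hk
    constructor
    · simp [hbl]; omega
    · set j := min k (H - ℓ') with hj
      have hjN : j ≤ H - ℓ' := min_le_right _ _
      obtain ⟨s, hs⟩ := hpre (H - ℓ' - j) j (by omega)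
      obtain ⟨b0, hb0, hinf⟩ := (hX j hjN).2
      refine ⟨b0, hb0, ?_⟩
      refine List.IsInfix.trans ?_ hinf
      have hdd : b.drop k = (b.drop j).drop (k - j) := by
        rw [List.drop_drop]
        congr 1
        omega
      rw [hdd, ← hs, List.drop_append_of_le_length (by rw [hlen j hjN]; omega),
        List.take_append_of_le_length (by simp [hlen j hjN]; omega)]
      exact ((List.take_prefix _ _).isInfix).trans ((List.drop_suffix _ _).isInfix)
  refine ⟨fun k => (b.drop k).take ℓ, ⟨hW 0 (by omega), ?_⟩, ?_, ?_⟩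
  · obtain ⟨y, hy, hhy⟩ := hinit.2
    refine ⟨y, hy, ?_⟩
    have hy0 : (r 0).headI = y := by
      cases h : r 0 with
      | nil => simp [h] at hhy
      | cons a t => simp [h] at hhy ⊢; exact hhy
    have h0 : b.drop 0 = (r 0).headI :: b.drop 1 := hdropk 0 (by omega)
    simp only [List.drop_zero] at h0
    obtain ⟨m, rfl⟩ : ∃ m, ℓ = m + 1 := ⟨ℓ - 1, by omega⟩
    show (List.take (m+1) (b.drop 0)).head? = some y
    rw [List.drop_zero, h0, List.take_succ_cons]
    simp [hy0]
  · intro k hk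
    refine ⟨hW k (by omega), hW (k+1) (by omega), ?_⟩
    have hLHS : ((b.drop k).take ℓ).tail = (b.drop (k+1)).take (ℓ-1) := by
      rw [← List.drop_one, List.drop_take, List.drop_drop]
    have hRHS : ((b.drop (k+1)).take ℓ).dropLast = (b.drop (k+1)).take (ℓ-1) := by
      rw [List.dropLast_eq_take, List.length_take, List.take_take]
      congr 1
      simp [hbl]
      omega
    exact hLHS.trans hRHS.symm
  · have hfun : (fun k => ((b.drop k).take ℓ).headI) = fun k => (b.drop k).headI :=
      funext fun k => headI_take _ (by omega)
    have htail : ((b.drop (H - ℓ)).take ℓ).tail = b.drop (H - ℓ + 1) := by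
      rw [List.take_of_length_le (by simp [hbl]; omega)]
      rw [← List.drop_one, List.drop_drop]
    show b = ((List.range (H - ℓ + 1)).map fun k => ((b.drop k).take ℓ).headI) ++
      ((b.drop (H - ℓ)).take ℓ).tail
    rw [hfun, htail]
    exact decomp (H - ℓ + 1) b (by omega)
end

section
/- If the SAℓCA S_ℓ of a transition system S satisfies the time-bounded Reach-While-Avoid specification ψ(X_{ℓ0}, X_{ℓS}, X_{ℓG}, H) on its abstract state space, and the initial, safe, and goal sets of S are aligned with the output map, then S satisfies ψ(X0, X_S, X_G, H). -/
/-- if the SAℓCA satisfies the time-bounded Reach-While-Avoid specification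
(on output behaviors, the sets being aligned with the output map), then so does `S`. -/
theorem stmt3 {X Y : Type*} [Inhabited Y] (S : TS X Y) (H ℓ : ℕ)
    (h1 : 1 < ℓ) (h2 : ℓ ≤ H)
    (XS XG : Set X) (YI YS YG : Set Y)
    (hI : ∀ x, S.out x ∈ YI ↔ x ∈ S.init)
    (hS : ∀ x, S.out x ∈ YS ↔ x ∈ XS)
    (hG : ∀ x, S.out x ∈ YG ↔ x ∈ XG)
    (habs : ∀ b ∈ AbsBehH S H ℓ, ∃ k' < H, (∃ y ∈ YG, b[k']? = some y) ∧
        ∀ k ≤ k', ∃ y ∈ YS, b[k]? = some y) :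
    ∀ r : ℕ → X, r 0 ∈ S.init → (∀ k, S.edge (r k) (r (k + 1))) →
      ∃ k' < H, r k' ∈ XG ∧ ∀ k ≤ k', r k ∈ XS := by
  intro r hr0 hre
  obtain ⟨m, rfl⟩ : ∃ m, ℓ = m + 2 := ⟨ℓ - 2, by omega⟩
  set f : ℕ → Y := fun k => S.out (r k) with hf
  set b : List Y := (List.range H).map f with hb_def
  have hbB : b ∈ BehH S H := ⟨r, hr0, fun k _ => hre k, rfl⟩
  set w : ℕ → List Y := fun k => (List.range (m + 2)).map (fun i => f (k + i)) with hw_def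
  -- decomposition of b
  have hdecomp : ∀ k, k ≤ H →
      b = (List.range k).map f ++ (List.range (H - k)).map (fun i => f (k + i)) := by
    intro k hk
    rw [hb_def]
    conv_lhs => rw [show H = k + (H - k) by omega, List.range_add, List.map_append,
      List.map_map]
    rfl
  -- each window is an abstract state
  have hwX : ∀ k, k ≤ H - (m + 2) → w k ∈ Xell (BehH S H) (m + 2) := by
    intro k hk
    refine ⟨by simp [hw_def], b, hbB, ?_⟩
    rw [hdecomp k (by omega)]
    refine ((List.IsPrefix.isInfix ?_).trans (List.suffix_append _ _).isInfix)
    have : w k = ((List.range (H - k)).map (fun i => f (k + i))).take (m + 2) := by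
      rw [← List.map_take, List.take_range, show min (m + 2) (H - k) = m + 2 by omega]
    rw [this]
    exact List.take_prefix _ _
  -- head and tail of windows
  have hhead : ∀ k, (w k).headI = f k := by
    intro k
    show ((List.range (m + 2)).map (fun i => f (k + i))).headI = f k
    rw [show m + 2 = (m + 1) + 1 from rfl, List.range_succ_eq_map]
    simp
  have htail : ∀ k, (w k).tail = (List.range (m + 1)).map (fun i => f (k + 1 + i)) := by
    intro k
    show ((List.range (m + 2)).map (fun i => f (k + i))).tail = _
    rw [show m + 2 = (m + 1) + 1 from rfl, List.range_succ_eq_map, List.map_cons,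
      List.tail_cons, List.map_map]
    refine List.map_congr_left fun i _ => ?_
    show f (k + (i + 1)) = f (k + 1 + i)
    congr 1
    omega
  have hdrop : ∀ k, (w k).dropLast = (List.range (m + 1)).map (fun i => f (k + i)) := by
    intro k
    show ((List.range (m + 2)).map (fun i => f (k + i))).dropLast = _
    rw [List.range_succ, List.map_append]
    simp
  -- the flattened abstract behavior is b
  have hflat : ((List.range (H - (m + 2) + 1)).map fun k => (w k).headI)
      ++ (w (H - (m + 2))).tail = b := by
    rw [htail, hdecomp (H - (m + 2) + 1) (by omega),
      show H - (H - (m + 2) + 1) = m + 1 by omega]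
    congr 1
    exact List.map_congr_left fun i _ => hhead i
  -- b is an abstract behavior
  have hbA : b ∈ AbsBehH S H (m + 2) := by
    refine ⟨w, ⟨hwX 0 (by omega), f 0, ⟨r 0, hr0, rfl⟩, ?_⟩, ?_, hflat.symm⟩
    · show ((List.range (m + 2)).map (fun i => f (0 + i))).head? = some (f 0)
      rw [show m + 2 = (m + 1) + 1 from rfl, List.range_succ_eq_map]
      simp
    · intro k hk
      refine ⟨hwX k (by omega), hwX (k + 1) (by omega), ?_⟩
      rw [htail, hdrop]
  obtain ⟨k', hk', ⟨y, hyG, hky⟩, hall⟩ := habs b hbA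
  have hbk : ∀ k, k < H → b[k]? = some (f k) := by
    intro k hk
    rw [hb_def]
    simp [List.getElem?_map, List.getElem?_range, hk]
  refine ⟨k', hk', ?_, ?_⟩
  · rw [hbk k' hk'] at hky
    have hy : y = f k' := by injection hky.symm
    rw [hy] at hyG
    exact (hG (r k')).mp hyG
  · intro k hk
    obtain ⟨z, hzS, hkz⟩ := hall k hk
    rw [hbk k (by omega)] at hkz
    have hz : z = f k := by injection hkz.symm
    rw [hz] at hzS
    exact (hS (r k)).mp hzS
end

section
/- Chain of inclusions for data-driven abstractions: if the sampled behavior set satisfies ĥB ⊆ B^H(S), then the data-driven SAℓCA Ŝ_ℓ built from ĥB satisfies B^H(Ŝ_ℓ) ⊆ B^H(S_ℓ), where S_ℓ is the SAℓCA built from the full behavior set B^H(S). -/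
/-- monotonicity of the SAℓCA construction in the generating behavior set:
if the sampled behaviors satisfy `B̂ ⊆ B^H(S)`, then `B^H(Ŝ_ℓ) ⊆ B^H(S_ℓ)`. -/
theorem stmt9 {X Y : Type*} [Inhabited Y] (S : TS X Y) (H ℓ : ℕ)
    (Bhat : Set (List Y)) (hsub : Bhat ⊆ BehH S H) :
    AbsBeh Bhat (S.out '' S.init) H ℓ ⊆ AbsBehH S H ℓ := by
  have hX : Xell Bhat ℓ ⊆ Xell (BehH S H) ℓ := by
    rintro σ ⟨hlen, b, hb, hinf⟩
    exact ⟨hlen, b, hsub hb, hinf⟩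
  rintro b ⟨r, ⟨h0, hy⟩, hedge, hb⟩
  exact ⟨r, ⟨hX h0, hy⟩, fun k hk => ⟨hX (hedge k hk).1, hX (hedge k hk).2.1,
    (hedge k hk).2.2⟩, hb⟩
end

section
/- Every H-long behavior in the sample is a behavior of the data-driven SAℓCA: for any finite set of sampled initial conditions with behaviors B̂, each b ∈ B̂ belongs to B^H(Ŝ_ℓ), for any 1 < ℓ ≤ H. -/
/-- every sampled `H`-long behavior is a behavior of the data-driven
SAℓCA built from the samples, for any `1 < ℓ ≤ H`. -/
theorem stmt10 {X Y : Type*} [Inhabited Y] (S : TS X Y) (H ℓ : ℕ)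
    (h1 : 1 < ℓ) (h2 : ℓ ≤ H)
    (Bhat : Set (List Y)) (hsub : Bhat ⊆ BehH S H) :
    ∀ b ∈ Bhat, b ∈ AbsBeh Bhat (S.out '' S.init) H ℓ := by
  intro b hb
  obtain ⟨r, hr0, -, hbdef⟩ := hsub hb
  set f : ℕ → Y := fun k => S.out (r k) with hf
  obtain ⟨n, rfl⟩ : ∃ n, ℓ = n + 1 := ⟨ℓ - 1, by omega⟩
  set m := H - (n + 1) with hm
  set w : ℕ → List Y := fun k => (List.range' k (n + 1)).map f with hw
  have key : ∀ k, k ≤ m → List.range' k (n + 1) <:+: List.range H := by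
    intro k hk
    rw [List.range_eq_range']
    refine ⟨List.range' 0 k, List.range' (k + (n + 1)) (H - (k + (n + 1))), ?_⟩
    have e1 := List.range'_append (s := k) (m := n + 1) (n := H - (k + (n + 1))) (step := 1)
    have e2 := List.range'_append (s := 0) (m := k) (n := H - k) (step := 1)
    simp only [one_mul, zero_add] at e1 e2
    rw [List.append_assoc, e1]
    have h3 : n + 1 + (H - (k + (n + 1))) = H - k := by omega
    rw [h3, e2]
    congr 1
    omega
  have hXell : ∀ k, k ≤ m → w k ∈ Xell Bhat (n + 1) := by
    intro k hk
    refine ⟨by simp [hw], b, hb, ?_⟩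
    rw [hbdef]
    exact (key k hk).map f
  have hhead : ∀ k, (w k).headI = f k := by
    intro k
    simp [hw, List.range'_succ]
  have htail : ∀ k, (w k).tail = (List.range' (k + 1) n).map f := by
    intro k
    simp [hw, List.range'_succ]
  refine ⟨fun k => w (min k m), ?_, ?_, ?_⟩
  · show w (min 0 m) ∈ _ ∧ _
    rw [Nat.min_eq_left (Nat.zero_le m)]
    exact ⟨hXell 0 (Nat.zero_le m), f 0, ⟨r 0, hr0, rfl⟩, by simp [hw, List.range'_succ]⟩
  · intro k hk
    show (AbsTS Bhat (S.out '' S.init) (n + 1)).edge (w (min k m)) (w (min (k + 1) m))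
    have e1 : min k m = k := by omega
    have e2 : min (k + 1) m = k + 1 := by omega
    rw [e1, e2]
    refine ⟨hXell k (by omega), hXell (k + 1) (by omega), ?_⟩
    rw [htail k]
    have hc : List.range' (k + 1) (n + 1) = List.range' (k + 1) n ++ [(k + 1) + 1 * n] :=
      List.range'_concat
    simp only [hw, hc, List.map_append, List.map_cons, List.map_nil]
    rw [List.dropLast_concat]
  · show b = ((List.range (m + 1)).map fun k => (w (min k m)).headI) ++ (w (min m m)).tail
    rw [min_self]
    have hmap : (List.range (m + 1)).map (fun k => (w (min k m)).headI)
        = (List.range (m + 1)).map f := by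
      apply List.map_congr_left
      intro k hk
      rw [List.mem_range] at hk
      have e1 : min k m = k := by omega
      rw [e1, hhead]
    rw [hmap, htail m, hbdef, List.range_eq_range', List.range_eq_range', ← List.map_append]
    congr 1
    have e2 := List.range'_append (s := 0) (m := m + 1) (n := n) (step := 1)
    simp only [one_mul, zero_add] at e2
    rw [e2]
    congr 1
    omega
end
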